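/- With ℙ_R the infinite product of uniform distributions on D(0,R), the global Green function 𝐠_R(0) = ∫ g_ω(0) dℙ_R(ω) satisfies lim_{R→∞} 𝐠_R(0)/ln R = 1/2. -/

import Mathlib

open Metric Complex Filter MeasureTheory

/-- The quadratic polynomial `f_c(z) = z^2 + c`. -/
noncomputable def fc (c z : ℂ) : ℂ := z ^ 2 + c

/-- The non-autonomous orbit: `orbitC ω z n = f_{ω(n-1)} ∘ ... ∘ f_{ω 0} (z)`. -/
noncomputable def orbitC (ω : ℕ → ℂ) (z : ℂ) : ℕ → ℂ
  | 0 => z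
  | n + 1 => fc (ω n) (orbitC ω z n)

-- The Green function at the critical point: `g_ω(0) = lim_n 2^{-n} ln |f^n_ω(0)|` when `0`
-- escapes to infinity, and `0` otherwise.
open Classical in
noncomputable def green0 (ω : ℕ → ℂ) : ℝ :=
  if Tendsto (fun n => ‖orbitC ω 0 n‖) atTop atTop then
    limUnder atTop (fun n : ℕ => Real.log (‖orbitC ω 0 n‖) / 2 ^ n)
  else 0

/-- `P` is the infinite product of uniform distributions on the disk `D(0,R)`: it is a
probability measure on `D(0,R)^ℕ ⊆ ℂ^ℕ` whose finite-dimensional cylinder marginals are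
products of normalized Lebesgue measures on `D(0,R)`. -/
def IsProductOfUniform (P : Measure (ℕ → ℂ)) (R : ℝ) : Prop :=
  IsProbabilityMeasure P ∧
    ∀ (s : Finset ℕ) (B : ℕ → Set ℂ), (∀ i, MeasurableSet (B i)) →
      P {ω | ∀ i ∈ s, ω i ∈ B i} =
        ∏ i ∈ s, (volume (ball (0 : ℂ) R))⁻¹ * volume (B i ∩ ball (0 : ℂ) R)

open Topology

namespace Aux

lemma orbit_succ (ω : ℕ → ℂ) (n : ℕ) :
    orbitC ω 0 (n+1) = (orbitC ω 0 n) ^ 2 + ω n := rfl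

/-- abbreviation for the modulus of the orbit -/
noncomputable def z (ω : ℕ → ℂ) (n : ℕ) : ℝ := ‖orbitC ω 0 n‖

lemma z_nonneg (ω : ℕ → ℂ) (n : ℕ) : 0 ≤ z ω n := norm_nonneg _

lemma z_succ_le (ω : ℕ → ℂ) (n : ℕ) : z ω (n+1) ≤ (z ω n)^2 + ‖ω n‖ := by
  rw [z, orbit_succ]
  refine le_trans (norm_add_le _ _) ?_
  rw [norm_pow]; rfl

lemma z_succ_ge (ω : ℕ → ℂ) (n : ℕ) : (z ω n)^2 - ‖ω n‖ ≤ z ω (n+1) := by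
  have : z ω (n+1) = ‖(orbitC ω 0 n)^2 + ω n‖ := rfl
  rw [this]
  have h2 : ‖(orbitC ω 0 n)^2‖ ≤ ‖(orbitC ω 0 n)^2 + ω n‖ + ‖ω n‖ := by
    calc ‖(orbitC ω 0 n)^2‖ = ‖((orbitC ω 0 n)^2 + ω n) - ω n‖ := by ring_nf
    _ ≤ ‖(orbitC ω 0 n)^2 + ω n‖ + ‖ω n‖ := norm_sub_le _ _
  simp only [norm_pow] at h2
  have hz : z ω n = ‖orbitC ω 0 n‖ := rfl
  rw [hz]
  linarith

/-- deterministic upper bound -/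
lemma upper {ω : ℕ → ℂ} {R : ℝ} (hR : 1 ≤ R) (hω : ∀ i, ‖ω i‖ ≤ R) :
    ∀ n, max (z ω (n+1)) R ≤ (2*R)^(2^n) / 2 := by
  intro n
  induction n with
  | zero =>
    simp only [pow_zero, pow_one]
    have h1 : z ω 1 ≤ R := by
      have := z_succ_le ω 0
      simp [z, orbitC] at this ⊢
      calc ‖orbitC ω 0 1‖ ≤ (‖orbitC ω 0 0‖)^2 + ‖ω 0‖ :=
        z_succ_le ω 0
      _ ≤ R := by simp [z, orbitC]; exact hω 0
    rw [max_le_iff]; constructor <;> nlinarith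
  | succ n ih =>
    have hMR : R ≤ max (z ω (n+1)) R := le_max_right _ _
    have hM1 : (1:ℝ) ≤ max (z ω (n+1)) R := le_trans hR hMR
    have hz : z ω (n+1) ≤ max (z ω (n+1)) R := le_max_left _ _
    have key : z ω (n+2) ≤ 2 * (max (z ω (n+1)) R)^2 := by
      have := z_succ_le ω (n+1)
      have hωn := hω (n+1)
      nlinarith [z_nonneg ω (n+1)]
    have h2 : (2*R)^(2^(n+1)) / 2 = 2 * ((2*R)^(2^n)/2)^2 := by
      rw [pow_succ, pow_mul]; ring
    rw [max_le_iff]; constructor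
    · rw [h2]
      have := sq_nonneg (max (z ω (n+1)) R)
      nlinarith [ih, sq_nonneg ((2*R)^(2^n)/2), hM1]
    · rw [h2]; nlinarith [ih, hM1]

lemma upper' {ω : ℕ → ℂ} {R : ℝ} (hR : 1 ≤ R) (hω : ∀ i, ‖ω i‖ ≤ R) (n : ℕ) :
    Real.log (z ω (n+1)) / 2^(n+1) ≤ Real.log (2*R) / 2 := by
  have hlog2R : 0 ≤ Real.log (2*R) := Real.log_nonneg (by linarith)
  have hb : z ω (n+1) ≤ (2*R)^(2^n) := by
    have := upper hR hω n
    have h2 : (2*R)^(2^n)/2 ≤ (2*R)^(2^n) := by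
      have : (1:ℝ) ≤ (2*R)^(2^n) := one_le_pow₀ (by linarith)
      linarith
    exact le_trans (le_trans (le_max_left _ _) this) h2
  have hlz : Real.log (z ω (n+1)) ≤ 2^n * Real.log (2*R) := by
    rcases le_or_gt (z ω (n+1)) 0 with h | h
    · have : Real.log (z ω (n+1)) = 0 := by
        have : z ω (n+1) = 0 := le_antisymm h (z_nonneg ω (n+1))
        rw [this, Real.log_zero]
      rw [this]; positivity
    · calc Real.log (z ω (n+1)) ≤ Real.log ((2*R)^(2^n)) := Real.log_le_log h hb
      _ = 2^n * Real.log (2*R) := by rw [Real.log_pow]; push_cast; ring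
  rw [div_le_div_iff₀ (by positivity) (by norm_num)]
  calc Real.log (z ω (n+1)) * 2 ≤ 2^n * Real.log (2*R) * 2 := by linarith
  _ = Real.log (2*R) * 2^(n+1) := by rw [pow_succ]; ring

/-- deterministic lower bound on the event |ω 0| large -/
lemma lower {ω : ℕ → ℂ} {R : ℝ} (hR : 1 ≤ R) (hω : ∀ i, ‖ω i‖ ≤ R)
    (ha : 4 ≤ ‖ω 0‖) (ha2 : 2*R ≤ (‖ω 0‖)^2) :
    ∀ n, 2 * (‖ω 0‖ / 2)^(2^n) ≤ z ω (n+1) := by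
  set a := ‖ω 0‖ with hadef
  intro n
  induction n with
  | zero =>
    have : z ω 1 = a := by
      simp [z, orbitC, fc, hadef]
    rw [this, pow_zero, pow_one]; linarith
  | succ n ih =>
    have hge := z_succ_ge ω (n+1)
    have hωn := hω (n+1)
    have hpow : a/2 ≤ (a/2)^(2^n) := by
      calc a/2 = (a/2)^1 := (pow_one _).symm
      _ ≤ (a/2)^(2^n) := pow_le_pow_right₀ (by linarith) (Nat.one_le_two_pow)
    have hzn : a ≤ z ω (n+1) := le_trans (by linarith) ih
    have hz2 : 2*R ≤ (z ω (n+1))^2 := by nlinarith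
    have key : (z ω (n+1))^2 / 2 ≤ z ω (n+2) := by nlinarith
    have h2 : 2 * (a/2)^(2^(n+1)) = (2 * (a/2)^(2^n))^2 / 2 := by
      rw [pow_succ, pow_mul]; ring
    rw [h2]
    have : (2 * (a/2)^(2^n))^2 ≤ (z ω (n+1))^2 := by
      apply sq_le_sq' <;> nlinarith
    linarith

lemma lower_tendsto {ω : ℕ → ℂ} {R : ℝ} (hR : 1 ≤ R) (hω : ∀ i, ‖ω i‖ ≤ R)
    (ha : 4 ≤ ‖ω 0‖) (ha2 : 2*R ≤ (‖ω 0‖)^2) :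
    Tendsto (fun n => z ω n) atTop atTop := by
  rw [← Filter.tendsto_add_atTop_iff_nat 1]
  apply tendsto_atTop_mono (f := fun n : ℕ => (2:ℝ)^n)
  · intro n
    have h1 := lower hR hω ha ha2 n
    have h2 : (2:ℝ)^n ≤ 2 * (‖ω 0‖/2)^(2^n) := by
      have ha4 : (2:ℝ) ≤ ‖ω 0‖/2 := by linarith
      calc (2:ℝ)^n ≤ 2^(2^n) := by
            apply pow_le_pow_right₀ (by norm_num) (Nat.le_of_lt (Nat.lt_two_pow_self (n := n)))
      _ ≤ (‖ω 0‖/2)^(2^n) := pow_le_pow_left₀ (by norm_num) ha4 _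
      _ ≤ 2 * (‖ω 0‖/2)^(2^n) := by nlinarith [pow_nonneg (by linarith : (0:ℝ) ≤ ‖ω 0‖/2) (2^n)]
    linarith
  · exact tendsto_pow_atTop_atTop_of_one_lt (by norm_num)

/-- on the escape set with bounded coefficients, the normalized log-sequence converges -/
lemma escape_conv {ω : ℕ → ℂ} {R : ℝ} (hR : 1 ≤ R) (hω : ∀ i, ‖ω i‖ ≤ R)
    (hesc : Tendsto (fun n => z ω n) atTop atTop) :
    ∃ L, Tendsto (fun n : ℕ => Real.log (z ω n) / 2 ^ n) atTop (𝓝 L) := by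
  obtain ⟨N, hN⟩ := (hesc.eventually_ge_atTop (2*R)).exists_forall_of_atTop
  have hzb : ∀ n, N ≤ n → 2*R ≤ z ω n := hN
  have hstep : ∀ n, N ≤ n →
      |Real.log (z ω (n+1)) - 2 * Real.log (z ω n)| ≤ Real.log 2 := by
    intro n hn
    have h1 : 2*R ≤ z ω n := hzb n hn
    have hz0 : (0:ℝ) < z ω n := by linarith
    have hub : z ω (n+1) ≤ 2 * (z ω n)^2 := by
      have := z_succ_le ω n
      have := hω n
      nlinarith
    have hlb : (z ω n)^2 / 2 ≤ z ω (n+1) := by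
      have := z_succ_ge ω n
      have := hω n
      nlinarith
    have hz10 : (0:ℝ) < z ω (n+1) := by nlinarith
    rw [abs_le]
    constructor
    · have := Real.log_le_log (by nlinarith) hlb
      rw [Real.log_div (by nlinarith) (by norm_num), Real.log_pow] at this
      push_cast at this
      linarith
    · have := Real.log_le_log hz10 hub
      rw [Real.log_mul (by norm_num) (by nlinarith), Real.log_pow] at this
      push_cast at this
      linarith
  have hdist : ∀ n, dist (Real.log (z ω (N+n)) / 2^(N+n)) (Real.log (z ω (N+n+1)) / 2^(N+n+1))
      ≤ (Real.log 2 / 2^(N+1)) * (1/2)^n := by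
    intro n
    have h := hstep (N+n) (Nat.le_add_right _ _)
    rw [Real.dist_eq]
    have h2 : Real.log (z ω (N+n)) / 2^(N+n) - Real.log (z ω (N+n+1)) / 2^(N+n+1)
        = (2 * Real.log (z ω (N+n)) - Real.log (z ω (N+n+1))) / 2^(N+n+1) := by
      rw [pow_succ]; field_simp
    rw [h2, abs_div, abs_of_pos (by positivity : (0:ℝ) < (2:ℝ)^(N+n+1))]
    rw [div_le_iff₀ (by positivity)]
    have h3 : |2 * Real.log (z ω (N+n)) - Real.log (z ω (N+n+1))| ≤ Real.log 2 := by
      rw [abs_sub_comm]; exact h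
    calc |2 * Real.log (z ω (N+n)) - Real.log (z ω (N+n+1))| ≤ Real.log 2 := h3
    _ = Real.log 2 / 2^(N+1) * (1/2)^n * 2^(N+n+1) := by
        rw [show N+n+1 = (N+1)+n from by ring, pow_add]
        have e2 : ((1:ℝ)/2)^n = ((2:ℝ)^n)⁻¹ := by rw [one_div, inv_pow]
        rw [e2]
        have h5 : (2:ℝ)^(N+1) ≠ 0 := by positivity
        have h6 : (2:ℝ)^n ≠ 0 := by positivity
        field_simp
        rw [pow_add, pow_succ]
  have hcau : CauchySeq (fun n : ℕ => Real.log (z ω n) / 2^n) := by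
    rw [← cauchySeq_shift N]
    apply cauchySeq_of_le_geometric (1/2) (Real.log 2 / 2^(N+1)) (by norm_num)
    intro n
    have := hdist n
    rw [show N + n + 1 = N + (n+1) from by ring] at this
    simpa [Nat.add_comm] using this
  exact cauchySeq_tendsto_of_complete hcau

lemma green0_bounds {ω : ℕ → ℂ} {R : ℝ} (hR : 1 ≤ R) (hω : ∀ i, ‖ω i‖ ≤ R) :
    0 ≤ green0 ω ∧ green0 ω ≤ Real.log (2*R) / 2 := by
  have hlog : 0 ≤ Real.log (2*R) := Real.log_nonneg (by linarith)
  unfold green0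
  split_ifs with hesc
  · obtain ⟨L, hL⟩ := escape_conv hR hω hesc
    rw [show (fun n : ℕ => Real.log (‖orbitC ω 0 n‖) / 2 ^ n)
        = fun n : ℕ => Real.log (z ω n)/2^n from rfl, hL.limUnder_eq]
    constructor
    · refine ge_of_tendsto hL ?_
      filter_upwards [hesc.eventually_ge_atTop 2] with n hn
      have hn' : 2 ≤ z ω n := hn
      have h0 : 0 ≤ Real.log (z ω n) := Real.log_nonneg (by linarith)
      positivity
    · refine le_of_tendsto hL ?_
      filter_upwards [eventually_atTop.2 ⟨1, fun n hn => hn⟩] with n hn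
      obtain ⟨m, rfl⟩ := Nat.exists_eq_add_of_le hn
      rw [Nat.add_comm]
      exact upper' hR hω m
  · exact ⟨le_refl 0, by positivity⟩

lemma green0_lower {ω : ℕ → ℂ} {R : ℝ} (hR : 1 ≤ R) (hω : ∀ i, ‖ω i‖ ≤ R)
    (ha : 4 ≤ ‖ω 0‖) (ha2 : 2*R ≤ (‖ω 0‖)^2) :
    Real.log (‖ω 0‖ / 2) / 2 ≤ green0 ω := by
  set a := ‖ω 0‖ with hadef
  have hesc := lower_tendsto hR hω ha ha2
  have hloga : 0 ≤ Real.log (a/2) := Real.log_nonneg (by linarith)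
  unfold green0
  split_ifs with h
  · obtain ⟨L, hL⟩ := escape_conv hR hω hesc
    rw [show (fun n : ℕ => Real.log (‖orbitC ω 0 n‖) / 2 ^ n)
        = fun n : ℕ => Real.log (z ω n)/2^n from rfl, hL.limUnder_eq]
    refine ge_of_tendsto hL ?_
    filter_upwards [eventually_atTop.2 ⟨1, fun n hn => hn⟩] with n hn
    obtain ⟨m, rfl⟩ := Nat.exists_eq_add_of_le hn
    rw [Nat.add_comm]
    have hl := lower hR hω ha ha2 m
    have hp : (0:ℝ) < (a/2)^(2^m) := by positivity
    have hlogz : 2^m * Real.log (a/2) ≤ Real.log (z ω (m+1)) := by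
      have h1 : Real.log (2 * (a/2)^(2^m)) ≤ Real.log (z ω (m+1)) :=
        Real.log_le_log (by positivity) hl
      rw [Real.log_mul (by norm_num) (ne_of_gt hp), Real.log_pow] at h1
      have hlog2 : 0 ≤ Real.log 2 := Real.log_nonneg (by norm_num)
      push_cast at h1
      linarith
    rw [div_le_div_iff₀ (by norm_num) (by positivity)]
    calc Real.log (a/2) * 2^(m+1) = 2^m * Real.log (a/2) * 2 := by rw [pow_succ]; ring
    _ ≤ Real.log (z ω (m+1)) * 2 := by linarith
  · exact absurd hesc h

lemma measurable_orbit (n : ℕ) : Measurable (fun ω : ℕ → ℂ => orbitC ω 0 n) := by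
  induction n with
  | zero => exact measurable_const
  | succ n ih =>
    have : (fun ω : ℕ → ℂ => orbitC ω 0 (n+1)) = fun ω => (orbitC ω 0 n)^2 + ω n := rfl
    rw [this]
    exact (ih.pow_const 2).add (measurable_pi_apply n)

lemma measurable_z (n : ℕ) : Measurable (fun ω : ℕ → ℂ => z ω n) :=
  continuous_norm.measurable.comp (measurable_orbit n)

/-- the escape set -/
def S : Set (ℕ → ℂ) := {ω | Tendsto (fun n => ‖orbitC ω 0 n‖) atTop atTop}

lemma measurableSet_S : MeasurableSet S :=
  measurableSet_tendsto atTop (fun n => measurable_z n)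

lemma measurable_F (n : ℕ) :
    Measurable (S.indicator (fun ω => Real.log (z ω n) / 2^n)) :=
  ((Real.measurable_log.comp (measurable_z n)).div_const _).indicator measurableSet_S

lemma tendsto_F {ω : ℕ → ℂ} {R : ℝ} (hR : 1 ≤ R) (hω : ∀ i, ‖ω i‖ ≤ R) :
    Tendsto (fun n => S.indicator (fun ω' => Real.log (z ω' n) / 2^n) ω) atTop
      (𝓝 (green0 ω)) := by
  by_cases hS : ω ∈ S
  · obtain ⟨L, hL⟩ := escape_conv hR hω hS
    have hg : green0 ω = L := by
      have hS' : Tendsto (fun n => ‖orbitC ω 0 n‖) atTop atTop := hS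
      unfold green0
      rw [if_pos hS']
      exact hL.limUnder_eq
    rw [hg]
    simpa [Set.indicator_of_mem hS] using hL
  · have hg : green0 ω = 0 := by
      have hS' : ¬ Tendsto (fun n => ‖orbitC ω 0 n‖) atTop atTop := hS
      unfold green0
      rw [if_neg hS']
    rw [hg]
    simpa [Set.indicator_of_notMem hS] using tendsto_const_nhds

lemma aemeasurable_green0 {P : Measure (ℕ → ℂ)} {R : ℝ} (hR : 1 ≤ R)
    (hae : ∀ᵐ ω ∂P, ∀ i, ‖ω i‖ ≤ R) : AEMeasurable green0 P := by
  refine aemeasurable_of_tendsto_metrizable_ae atTop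
    (fun n => (measurable_F n).aemeasurable) ?_
  filter_upwards [hae] with ω hω
  exact tendsto_F hR hω

lemma ae_bounded {P : Measure (ℕ → ℂ)} {R : ℝ} (hP : IsProductOfUniform P R) :
    ∀ᵐ ω ∂P, ∀ i, ‖ω i‖ ≤ R := by
  have h1 : ∀ i : ℕ, P {ω : ℕ → ℂ | ω i ∈ (ball (0:ℂ) R)ᶜ} = 0 := by
    intro i
    have h := hP.2 {i} (fun _ => (ball (0:ℂ) R)ᶜ) (fun _ => measurableSet_ball.compl)
    simp only [Finset.mem_singleton, Finset.prod_singleton, forall_eq] at h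
    rw [h, Set.compl_inter_self, measure_empty, mul_zero]
  rw [ae_iff]
  refine measure_mono_null ?_ (measure_iUnion_null h1)
  intro ω hω
  simp only [Set.mem_setOf_eq, not_forall] at hω
  obtain ⟨i, hi⟩ := hω
  refine Set.mem_iUnion.2 ⟨i, ?_⟩
  simp only [Set.mem_setOf_eq, Set.mem_compl_iff, mem_ball, Complex.dist_eq, sub_zero]
  push_neg at hi ⊢
  exact le_of_lt hi

lemma prob_event {P : Measure (ℕ → ℂ)} {R δ : ℝ} (hP : IsProductOfUniform P R)
    (hR : 1 ≤ R) (hδ0 : 0 < δ) (hδ1 : δ ≤ 1/2) :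
    1 - δ^2 ≤ (P {ω : ℕ → ℂ | ω 0 ∈ (closedBall (0:ℂ) (δ*R))ᶜ}).toReal := by
  haveI := hP.1
  have hA : MeasurableSet {ω : ℕ → ℂ | ω 0 ∈ (closedBall (0:ℂ) (δ*R))ᶜ} :=
    measurableSet_closedBall.compl.preimage (measurable_pi_apply 0)
  have hv0 : volume (ball (0:ℂ) R) ≠ 0 := by
    rw [Complex.volume_ball]
    refine mul_ne_zero (pow_ne_zero _ ?_) ?_
    · simp only [ne_eq, ENNReal.ofReal_eq_zero, not_le]; linarith
    · simp only [ne_eq, ENNReal.coe_eq_zero]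
      exact ne_of_gt (by exact_mod_cast Real.pi_pos)
  have hvt : volume (ball (0:ℂ) R) ≠ ⊤ := by
    rw [Complex.volume_ball]
    exact ENNReal.mul_ne_top (ENNReal.pow_ne_top ENNReal.ofReal_ne_top) ENNReal.coe_ne_top
  have hAc : P {ω : ℕ → ℂ | ω 0 ∈ closedBall (0:ℂ) (δ*R)} ≤ ENNReal.ofReal (δ^2) := by
    have h := hP.2 {0} (fun _ => closedBall (0:ℂ) (δ*R)) (fun _ => measurableSet_closedBall)
    simp only [Finset.mem_singleton, Finset.prod_singleton, forall_eq] at h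
    rw [h]
    have hw : volume (closedBall (0:ℂ) (δ*R) ∩ ball (0:ℂ) R)
        ≤ ENNReal.ofReal (δ^2) * volume (ball (0:ℂ) R) := by
      refine le_trans (measure_mono Set.inter_subset_left) ?_
      rw [Complex.volume_closedBall, Complex.volume_ball]
      rw [ENNReal.ofReal_mul (le_of_lt hδ0), mul_pow, ← ENNReal.ofReal_pow (le_of_lt hδ0),
        mul_assoc]
    calc (volume (ball (0:ℂ) R))⁻¹ * volume (closedBall (0:ℂ) (δ*R) ∩ ball (0:ℂ) R)
        ≤ (volume (ball (0:ℂ) R))⁻¹ * (ENNReal.ofReal (δ^2) * volume (ball (0:ℂ) R)) := by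
          gcongr
      _ = ENNReal.ofReal (δ^2) * ((volume (ball (0:ℂ) R))⁻¹ * volume (ball (0:ℂ) R)) := by ring
      _ = ENNReal.ofReal (δ^2) := by rw [ENNReal.inv_mul_cancel hv0 hvt, mul_one]
  have hcompl : {ω : ℕ → ℂ | ω 0 ∈ (closedBall (0:ℂ) (δ*R))ᶜ}ᶜ
      = {ω : ℕ → ℂ | ω 0 ∈ closedBall (0:ℂ) (δ*R)} := by
    ext ω; simp
  have hδ2 : (0:ℝ) ≤ 1 - δ^2 := by nlinarith
  have hPA : (1:ENNReal) - ENNReal.ofReal (δ^2)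
      ≤ P {ω : ℕ → ℂ | ω 0 ∈ (closedBall (0:ℂ) (δ*R))ᶜ} := by
    have h2 := prob_compl_eq_one_sub (μ := P) hA
    rw [hcompl] at h2
    have h3 : (1:ENNReal) ≤ ENNReal.ofReal (δ^2)
        + P {ω : ℕ → ℂ | ω 0 ∈ (closedBall (0:ℂ) (δ*R))ᶜ} := by
      refine tsub_le_iff_right.mp ?_
      rw [← h2]; exact hAc
    exact tsub_le_iff_right.mpr (by rwa [add_comm] at h3)
  have key : ENNReal.ofReal (1 - δ^2) ≤ P {ω : ℕ → ℂ | ω 0 ∈ (closedBall (0:ℂ) (δ*R))ᶜ} := by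
    refine le_trans (le_of_eq ?_) hPA
    refine ENNReal.eq_sub_of_add_eq ENNReal.ofReal_ne_top ?_
    rw [← ENNReal.ofReal_add hδ2 (by positivity)]
    norm_num
  have := ENNReal.toReal_mono (measure_ne_top P _) key
  rwa [ENNReal.toReal_ofReal hδ2] at this

end Aux

set_option maxHeartbeats 1000000 in
/-- With `ℙ_R` the infinite product of uniform distributions on `D(0,R)`, the global Green
function `𝐠_R(0) = ∫ g_ω(0) dℙ_R(ω)` satisfies `lim_{R→∞} 𝐠_R(0) / ln R = 1/2`. -/
theorem stmt14 :
    ∀ ε : ℝ, 0 < ε → ∃ R1 : ℝ, ∀ R : ℝ, R ≥ R1 →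
      ∀ P : Measure (ℕ → ℂ), IsProductOfUniform P R →
        |(∫ ω, green0 ω ∂P) / Real.log R - 1 / 2| < ε := by
  intro ε hε
  set δ : ℝ := min (1/2) (Real.sqrt ε) with hδdef
  have hδ0 : 0 < δ := lt_min (by norm_num) (Real.sqrt_pos.2 hε)
  have hδhalf : δ ≤ 1/2 := min_le_left _ _
  have hδε : δ^2 ≤ ε := by
    have h1 : δ ≤ Real.sqrt ε := min_le_right _ _
    have h2 : Real.sqrt ε ^ 2 = ε := Real.sq_sqrt hε.le
    nlinarith [hδ0.le, Real.sqrt_nonneg ε]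
  have hlog2 : 0 ≤ Real.log 2 := Real.log_nonneg (by norm_num)
  have hq : Real.log δ ≤ Real.log 2 := Real.log_le_log hδ0 (by linarith)
  set K : ℝ := (Real.log 2 - Real.log δ)/ε + Real.log 2/ε + 1 with hKdef
  have hK1 : 1 ≤ K := by
    have h3 : 0 ≤ (Real.log 2 - Real.log δ)/ε := div_nonneg (by linarith) hε.le
    have h4 : 0 ≤ Real.log 2/ε := div_nonneg hlog2 hε.le
    rw [hKdef]; linarith
  refine ⟨max (Real.exp K) (max (4/δ) (2/δ^2)), fun R hR P hP => ?_⟩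
  haveI := hP.1
  have hRe : Real.exp K ≤ R := le_trans (le_max_left _ _) hR
  have hR1 : 1 ≤ R := by
    have := Real.one_le_exp (by linarith : (0:ℝ) ≤ K)
    linarith
  have hLr : K ≤ Real.log R := by
    rw [← Real.log_exp K]
    exact Real.log_le_log (Real.exp_pos K) hRe
  have hLr0 : 0 < Real.log R := lt_of_lt_of_le (by linarith) hLr
  have hRδ : 4 ≤ δ * R := by
    have h := le_trans (le_trans (le_max_left _ _) (le_max_right (Real.exp K) _)) hR
    rw [div_le_iff₀ hδ0] at h
    nlinarith
  have hRδ2 : 2 ≤ δ^2 * R := by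
    have h := le_trans (le_trans (le_max_right _ _) (le_max_right (Real.exp K) _)) hR
    rw [div_le_iff₀ (by positivity : (0:ℝ) < δ^2)] at h
    nlinarith
  have hae := Aux.ae_bounded hP
  have ham := Aux.aemeasurable_green0 hR1 hae
  have hbd : ∀ᵐ ω ∂P, 0 ≤ green0 ω ∧ green0 ω ≤ Real.log (2*R)/2 :=
    hae.mono (fun ω h => Aux.green0_bounds hR1 h)
  have hint : Integrable green0 P := by
    refine Integrable.mono' (integrable_const (Real.log (2*R)/2)) ham.aestronglyMeasurable ?_
    filter_upwards [hbd] with ω h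
    rw [Real.norm_eq_abs, _root_.abs_of_nonneg h.1]
    exact h.2
  have hup : ∫ ω, green0 ω ∂P ≤ Real.log (2*R)/2 := by
    calc ∫ ω, green0 ω ∂P ≤ ∫ _ω, Real.log (2*R)/2 ∂P :=
      integral_mono_ae hint (integrable_const _) (hbd.mono fun ω h => h.2)
    _ = Real.log (2*R)/2 := by simp
  set A := {ω : ℕ → ℂ | ω 0 ∈ (closedBall (0:ℂ) (δ*R))ᶜ} with hAdef
  have hAmeas : MeasurableSet A := measurableSet_closedBall.compl.preimage (measurable_pi_apply 0)
  set c : ℝ := Real.log (δ*R/2)/2 with hcdef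
  have hc0 : 0 ≤ c := div_nonneg (Real.log_nonneg (by linarith)) (by norm_num)
  have hglow : ∀ᵐ ω ∂P, A.indicator (fun _ => c) ω ≤ green0 ω := by
    filter_upwards [hae, hbd] with ω hω hb
    by_cases hmem : ω ∈ A
    · rw [Set.indicator_of_mem hmem]
      have habs : δ*R < ‖ω 0‖ := by
        have h5 : ω 0 ∉ closedBall (0:ℂ) (δ*R) := hmem
        rw [mem_closedBall, Complex.dist_eq, sub_zero] at h5
        push_neg at h5
        exact h5
      have h4 : 4 ≤ ‖ω 0‖ := by linarith
      have h2R : 2*R ≤ (‖ω 0‖)^2 := by nlinarith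
      have hgl := Aux.green0_lower hR1 hω h4 h2R
      have h6 : Real.log (δ*R/2) ≤ Real.log (‖ω 0‖/2) :=
        Real.log_le_log (by linarith) (by linarith)
      rw [hcdef]
      linarith
    · rw [Set.indicator_of_notMem hmem]
      exact hb.1
  have hlow : (1-δ^2) * c ≤ ∫ ω, green0 ω ∂P := by
    have hgi : Integrable (A.indicator (fun _ => c)) P := (integrable_const c).indicator hAmeas
    have h5 : ∫ ω, A.indicator (fun _ => c) ω ∂P = (P A).toReal * c := by
      rw [integral_indicator_const c hAmeas, smul_eq_mul]; rfl
    have h6 := integral_mono_ae hgi hint hglow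
    rw [h5] at h6
    have h7 := Aux.prob_event hP hR1 hδ0 hδhalf
    rw [← hAdef] at h7
    nlinarith [ENNReal.toReal_nonneg (a := P A)]
  -- arithmetic
  have hlogform : Real.log (δ*R/2) = Real.log δ + Real.log R - Real.log 2 := by
    rw [Real.log_div (by positivity) (by norm_num), Real.log_mul (ne_of_gt hδ0) (by linarith)]
  have hlog2R : Real.log (2*R) = Real.log 2 + Real.log R := by
    rw [Real.log_mul (by norm_num) (by linarith)]
  have heK : ε * K = (Real.log 2 - Real.log δ) + Real.log 2 + ε := by
    rw [hKdef]
    field_simp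
  have heL : (Real.log 2 - Real.log δ) + Real.log 2 + ε ≤ ε * Real.log R := by
    rw [← heK]
    exact mul_le_mul_of_nonneg_left hLr hε.le
  have hδ1 : δ^2 ≤ 1 := by nlinarith
  set X := ∫ ω, green0 ω ∂P with hXdef
  have hXup : X ≤ (Real.log 2 + Real.log R)/2 := by rw [← hlog2R]; exact hup
  have hXlow : (1-δ^2) * ((Real.log δ + Real.log R - Real.log 2)/2) ≤ X := by
    rw [← hlogform]
    calc (1-δ^2) * (Real.log (δ*R/2)/2) = (1-δ^2) * c := by rw [hcdef]
    _ ≤ X := hlow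
  have hLq : 0 ≤ Real.log δ + Real.log R - Real.log 2 := by
    rw [← hlogform]
    exact Real.log_nonneg (by linarith)
  rw [abs_lt]
  constructor
  · have hkey : (1/2 - ε) * Real.log R < X := by
      have hp1 : δ^2 * Real.log R ≤ ε * Real.log R :=
        mul_le_mul_of_nonneg_right hδε hLr0.le
      have hp2 : 0 ≤ δ^2 * (Real.log 2 - Real.log δ) :=
        mul_nonneg (sq_nonneg δ) (by linarith)
      have hexp : (1-δ^2) * ((Real.log δ + Real.log R - Real.log 2)/2)
          = (Real.log R + (Real.log δ - Real.log 2) - δ^2*Real.log R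
            + δ^2*(Real.log 2 - Real.log δ))/2 := by ring
      linarith [hexp, hp1, hp2, heL, hXlow, hε, hlog2]
    have := (lt_div_iff₀ hLr0).mpr hkey
    linarith
  · have hkey : X < (1/2 + ε) * Real.log R := by linarith [hXup, heL, hq, hlog2, hε]
    have := (div_lt_iff₀ hLr0).mpr hkey
    linarith
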